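/- Let G be a finite simple graph, and let x, y be adjacent vertices with x ∈ ker(G) and y ∈ N(ker(G)). Then there exists a matching f from N(ker(G)) into ker(G) with f(y) = x, i.e., every edge between ker(G) and N(ker(G)) belongs to some matching from N(ker(G)) into ker(G). -/

import Mathlib

open Finset

namespace CritGraph

variable {V : Type*} [Fintype V] [DecidableEq V]

/-- The neighborhood of a set of vertices `X`:
all vertices having at least one neighbor in `X`. -/
def nbhd (G : SimpleGraph V) [DecidableRel G.Adj] (X : Finset V) : Finset V :=
  univ.filter fun v => ∃ x ∈ X, G.Adj v x

/-- The difference `d(X) = |X| - |N(X)|` of a set of vertices `X`. -/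
def diff (G : SimpleGraph V) [DecidableRel G.Adj] (X : Finset V) : ℤ :=
  (X.card : ℤ) - ((nbhd G X).card : ℤ)

/-- A set of vertices is independent if no two of its vertices are adjacent. -/
def IsIndep (G : SimpleGraph V) (S : Finset V) : Prop :=
  ∀ u ∈ S, ∀ v ∈ S, ¬ G.Adj u v

instance (G : SimpleGraph V) [DecidableRel G.Adj] : DecidablePred (IsIndep G) := fun S =>
  inferInstanceAs (Decidable (∀ u ∈ S, ∀ v ∈ S, ¬ G.Adj u v))

/-- The critical difference `d_c(G) = max {d(X) : X ⊆ V}`. -/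
def dC (G : SimpleGraph V) [DecidableRel G.Adj] : ℤ :=
  (univ : Finset V).powerset.sup' (Finset.powerset_nonempty _) (diff G)

/-- The critical independence difference `id_c(G) = max {d(I) : I independent}`. -/
def idC (G : SimpleGraph V) [DecidableRel G.Adj] : ℤ :=
  ((univ : Finset V).powerset.filter (IsIndep G)).sup'
    ⟨∅, by simp [IsIndep]⟩ (diff G)

/-- `A` is a critical independent set: `A` is independent and
`d(A) = max {d(I) : I independent}`. -/
def IsCritIndep (G : SimpleGraph V) [DecidableRel G.Adj] (A : Finset V) : Prop :=
  IsIndep G A ∧ ∀ I : Finset V, IsIndep G I → diff G I ≤ diff G A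

instance (G : SimpleGraph V) [DecidableRel G.Adj] : DecidablePred (IsCritIndep G) := fun A =>
  inferInstanceAs (Decidable (IsIndep G A ∧ ∀ I : Finset V, IsIndep G I → diff G I ≤ diff G A))

/-- `ker(G)`: the intersection of all critical independent sets of `G`. -/
def kerG (G : SimpleGraph V) [DecidableRel G.Adj] : Finset V :=
  univ.filter fun v => ∀ A : Finset V, IsCritIndep G A → v ∈ A

/-- `G - v`: the induced subgraph of `G` on `V \ {v}`. -/
def deleteVert (G : SimpleGraph V) (v : V) : SimpleGraph {u : V // u ≠ v} :=
  G.comap Subtype.val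

instance (G : SimpleGraph V) (v : V) [DecidableRel G.Adj] :
    DecidableRel (deleteVert G v).Adj := fun a b =>
  inferInstanceAs (Decidable (G.Adj a.val b.val))

/-- `S` is an inclusion-minimal independent set with positive difference. -/
def MinPosIndep (G : SimpleGraph V) [DecidableRel G.Adj] (S : Finset V) : Prop :=
  IsIndep G S ∧ 0 < diff G S ∧ ∀ S' ⊂ S, ¬ (IsIndep G S' ∧ 0 < diff G S')

/-- `S` is a maximum independent set. -/
def IsMaxIndep (G : SimpleGraph V) (S : Finset V) : Prop :=
  IsIndep G S ∧ ∀ I : Finset V, IsIndep G I → I.card ≤ S.card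

instance (G : SimpleGraph V) [DecidableRel G.Adj] : DecidablePred (IsMaxIndep G) := fun S =>
  inferInstanceAs (Decidable (IsIndep G S ∧ ∀ I : Finset V, IsIndep G I → I.card ≤ S.card))

/-- `core(G)`: the intersection of all maximum independent sets of `G`. -/
def coreG (G : SimpleGraph V) [DecidableRel G.Adj] : Finset V :=
  univ.filter fun v => ∀ A : Finset V, IsMaxIndep G A → v ∈ A


section Aux
variable {G : SimpleGraph V} [DecidableRel G.Adj]

lemma mem_nbhd {X : Finset V} {v : V} : v ∈ nbhd G X ↔ ∃ x ∈ X, G.Adj v x := by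
  simp [nbhd]

lemma nbhd_mono {X Y : Finset V} (h : X ⊆ Y) : nbhd G X ⊆ nbhd G Y := by
  intro v hv
  rw [mem_nbhd] at hv ⊢
  obtain ⟨a, ha, hadj⟩ := hv
  exact ⟨a, h ha, hadj⟩

lemma indep_sdiff_nbhd (X : Finset V) : IsIndep G (X \ nbhd G X) := by
  intro u hu v hv hadj
  rw [mem_sdiff] at hu hv
  exact hu.2 (mem_nbhd.mpr ⟨v, hv.1, hadj⟩)

lemma diff_le_sdiff (X : Finset V) : diff G X ≤ diff G (X \ nbhd G X) := by
  have h1 : (X \ nbhd G X).card = X.card - (X ∩ nbhd G X).card := by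
    have := Finset.card_sdiff_add_card_inter X (nbhd G X)
    omega
  have hsub : nbhd G (X \ nbhd G X) ⊆ nbhd G X \ (X ∩ nbhd G X) := by
    intro v hv
    rw [mem_nbhd] at hv
    obtain ⟨a, ha, hadj⟩ := hv
    rw [mem_sdiff] at ha
    rw [mem_sdiff, mem_inter]
    refine ⟨mem_nbhd.mpr ⟨a, ha.1, hadj⟩, ?_⟩
    rintro ⟨hvX, -⟩
    exact ha.2 (mem_nbhd.mpr ⟨v, hvX, hadj.symm⟩)
  have h2 : (nbhd G (X \ nbhd G X)).card ≤ (nbhd G X).card - (X ∩ nbhd G X).card := by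
    calc (nbhd G (X \ nbhd G X)).card ≤ (nbhd G X \ (X ∩ nbhd G X)).card :=
          Finset.card_le_card hsub
      _ = (nbhd G X).card - (X ∩ nbhd G X).card := by
          rw [Finset.card_sdiff_of_subset (Finset.inter_subset_right)]
  have h3 : (X ∩ nbhd G X).card ≤ X.card := Finset.card_le_card Finset.inter_subset_left
  have h4 : (X ∩ nbhd G X).card ≤ (nbhd G X).card :=
    Finset.card_le_card Finset.inter_subset_right
  unfold diff
  omega

lemma nbhd_union (A B : Finset V) : nbhd G (A ∪ B) = nbhd G A ∪ nbhd G B := by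
  ext v
  simp only [mem_nbhd, mem_union]
  constructor
  · rintro ⟨a, ha | ha, hadj⟩
    · exact Or.inl ⟨a, ha, hadj⟩
    · exact Or.inr ⟨a, ha, hadj⟩
  · rintro (⟨a, ha, hadj⟩ | ⟨a, ha, hadj⟩)
    · exact ⟨a, Or.inl ha, hadj⟩
    · exact ⟨a, Or.inr ha, hadj⟩

lemma crit_inter {A B : Finset V} (hA : IsCritIndep G A) (hB : IsCritIndep G B) :
    IsCritIndep G (A ∩ B) := by
  have hindep : IsIndep G (A ∩ B) := fun u hu v hv =>
    hA.1 u (mem_inter.mp hu).1 v (mem_inter.mp hv).1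
  refine ⟨hindep, fun I hI => ?_⟩
  have hU : diff G (A ∪ B) ≤ diff G A := by
    calc diff G (A ∪ B) ≤ diff G ((A ∪ B) \ nbhd G (A ∪ B)) := diff_le_sdiff _
      _ ≤ diff G A := hA.2 _ (indep_sdiff_nbhd _)
  have hcard : (A ∩ B).card + (A ∪ B).card = A.card + B.card :=
    Finset.card_inter_add_card_union A B
  have hn1 : nbhd G (A ∩ B) ⊆ nbhd G A ∩ nbhd G B :=
    Finset.subset_inter (nbhd_mono Finset.inter_subset_left)
      (nbhd_mono Finset.inter_subset_right)
  have hn : (nbhd G (A ∩ B)).card + (nbhd G (A ∪ B)).card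
      ≤ (nbhd G A).card + (nbhd G B).card := by
    rw [nbhd_union]
    have := Finset.card_inter_add_card_union (nbhd G A) (nbhd G B)
    have := Finset.card_le_card hn1
    omega
  have hsup : diff G A + diff G B ≤ diff G (A ∩ B) + diff G (A ∪ B) := by
    unfold diff; push_cast; omega
  have := hB.2 I hI
  omega

lemma exists_crit : ∃ A : Finset V, IsCritIndep G A := by
  classical
  have hne : ((univ : Finset V).powerset.filter (IsIndep G)).Nonempty :=
    ⟨∅, by simp [IsIndep]⟩
  obtain ⟨A, hAmem, hAmax⟩ := Finset.exists_max_image _ (diff G) hne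
  rw [Finset.mem_filter] at hAmem
  exact ⟨A, hAmem.2, fun I hI => hAmax I (Finset.mem_filter.mpr ⟨Finset.mem_powerset.mpr
    (Finset.subset_univ I), hI⟩)⟩

lemma mem_kerG {v : V} : v ∈ kerG G ↔ ∀ A : Finset V, IsCritIndep G A → v ∈ A := by
  simp [kerG]

lemma kerG_crit : IsCritIndep G (kerG G) := by
  classical
  obtain ⟨A, hA⟩ := (exists_crit : ∃ A : Finset V, IsCritIndep G A)
  have hne : ((univ : Finset V).powerset.filter (IsCritIndep G)).Nonempty :=
    ⟨A, Finset.mem_filter.mpr ⟨Finset.mem_powerset.mpr (Finset.subset_univ A), hA⟩⟩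
  obtain ⟨A₀, hA₀mem, hmin⟩ := Finset.exists_min_image _ Finset.card hne
  rw [Finset.mem_filter] at hA₀mem
  have hA₀ : IsCritIndep G A₀ := hA₀mem.2
  have hsub : ∀ B : Finset V, IsCritIndep G B → A₀ ⊆ B := by
    intro B hB
    have hint : IsCritIndep G (A₀ ∩ B) := crit_inter hA₀ hB
    have h1 : A₀.card ≤ (A₀ ∩ B).card :=
      hmin _ (Finset.mem_filter.mpr ⟨Finset.mem_powerset.mpr (Finset.subset_univ _), hint⟩)
    have h2 : A₀ ∩ B = A₀ :=
      Finset.eq_of_subset_of_card_le Finset.inter_subset_left h1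
    rw [← h2]
    exact Finset.inter_subset_right
  have : kerG G = A₀ := by
    apply Finset.Subset.antisymm
    · intro v hv
      exact (mem_kerG.mp hv) A₀ hA₀
    · intro v hv
      rw [mem_kerG]
      intro B hB
      exact hsub B hB hv
  rw [this]; exact hA₀

lemma hall_cond (x : V) (hx : x ∈ kerG G) (B : Finset V) (hB : B ⊆ nbhd G (kerG G)) :
    B.card ≤ ((kerG G).erase x ∩ nbhd G B).card := by
  classical
  set K := kerG G with hK
  have hKcrit : IsCritIndep G K := kerG_crit
  set A' := K \ nbhd G B with hA'
  have hA'indep : IsIndep G A' := fun u hu v hv =>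
    hKcrit.1 u (mem_sdiff.mp hu).1 v (mem_sdiff.mp hv).1
  have hnbA' : nbhd G A' ⊆ nbhd G K \ B := by
    intro v hv
    rw [mem_nbhd] at hv
    obtain ⟨a, ha, hadj⟩ := hv
    rw [mem_sdiff] at ha
    rw [mem_sdiff]
    refine ⟨mem_nbhd.mpr ⟨a, ha.1, hadj⟩, fun hvB => ha.2 (mem_nbhd.mpr ⟨v, hvB, hadj.symm⟩)⟩
  have hcardA' : A'.card + (K ∩ nbhd G B).card = K.card :=
    Finset.card_sdiff_add_card_inter K (nbhd G B)
  have hBle : B.card ≤ (nbhd G K).card := Finset.card_le_card hB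
  have hcardN : (nbhd G A').card + B.card ≤ (nbhd G K).card := by
    have h1 : (nbhd G A').card ≤ (nbhd G K \ B).card := Finset.card_le_card hnbA'
    have h2 : (nbhd G K \ B).card = (nbhd G K).card - B.card := Finset.card_sdiff_of_subset hB
    omega
  have hKint : (K ∩ nbhd G B).card ≤ K.card := Finset.card_le_card Finset.inter_subset_left
  have hdA' : diff G K + (B.card : ℤ) - ((K ∩ nbhd G B).card : ℤ) ≤ diff G A' := by
    unfold diff
    push_cast
    omega
  have hle : diff G A' ≤ diff G K := hKcrit.2 _ hA'indep
  have hmain : B.card ≤ (K ∩ nbhd G B).card := by omega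
  by_cases hxB : x ∈ nbhd G B
  · -- strict case
    have hstrict : B.card < (K ∩ nbhd G B).card := by
      by_contra hcon
      push_neg at hcon
      have heq : (B.card : ℤ) = ((K ∩ nbhd G B).card : ℤ) := by omega
      have hA'crit : IsCritIndep G A' := by
        refine ⟨hA'indep, fun I hI => ?_⟩
        have := hKcrit.2 I hI
        omega
      have hxA' : x ∈ A' := mem_kerG.mp hx A' hA'crit
      rw [mem_sdiff] at hxA'
      exact hxA'.2 hxB
    have : (K.erase x ∩ nbhd G B).card = (K ∩ nbhd G B).card - 1 := by
      have hxm : x ∈ K ∩ nbhd G B := mem_inter.mpr ⟨hx, hxB⟩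
      have : K.erase x ∩ nbhd G B = (K ∩ nbhd G B).erase x := by
        ext v; simp only [mem_inter, mem_erase]; tauto
      rw [this, Finset.card_erase_of_mem hxm]
    omega
  · have : K.erase x ∩ nbhd G B = K ∩ nbhd G B := by
      ext v
      simp only [mem_inter, mem_erase]
      constructor
      · tauto
      · rintro ⟨hvK, hvN⟩
        exact ⟨⟨fun h => hxB (h ▸ hvN), hvK⟩, hvN⟩
    rw [this]
    exact hmain

end Aux

/-- Every edge between `ker(G)` and `N(ker(G))` belongs to some matching from
`N(ker(G))` into `ker(G)`. -/
theorem exists_matching_containing_edge (G : SimpleGraph V) [DecidableRel G.Adj]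
    (x y : V) (hxy : G.Adj x y) (hx : x ∈ kerG G) (hy : y ∈ nbhd G (kerG G)) :
    ∃ f : V → V, Set.InjOn f ↑(nbhd G (kerG G)) ∧
      (∀ u ∈ nbhd G (kerG G), f u ∈ kerG G ∧ G.Adj u (f u)) ∧ f y = x := by
  classical
  set K := kerG G with hKdef
  set D : Finset V := (nbhd G K).erase y with hD
  set t : {u // u ∈ D} → Finset V := fun u => (K.erase x).filter (fun v => G.Adj u.val v)
    with ht
  have hhall : ∀ s : Finset {u // u ∈ D}, s.card ≤ (s.biUnion t).card := by
    intro s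
    set B : Finset V := s.image Subtype.val with hB
    have hBcard : B.card = s.card := Finset.card_image_of_injective s Subtype.val_injective
    have hBsub : B ⊆ nbhd G K := by
      intro v hv
      rw [hB, Finset.mem_image] at hv
      obtain ⟨u, _, rfl⟩ := hv
      exact Finset.erase_subset _ _ u.2
    have hbi : K.erase x ∩ nbhd G B ⊆ s.biUnion t := by
      intro v hv
      rw [Finset.mem_inter, mem_nbhd] at hv
      obtain ⟨hvK, b, hb, hadj⟩ := hv
      rw [hB, Finset.mem_image] at hb
      obtain ⟨u, hu, rfl⟩ := hb
      rw [Finset.mem_biUnion]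
      exact ⟨u, hu, Finset.mem_filter.mpr ⟨hvK, hadj.symm⟩⟩
    calc s.card = B.card := hBcard.symm
      _ ≤ (K.erase x ∩ nbhd G B).card := hall_cond x hx B hBsub
      _ ≤ (s.biUnion t).card := Finset.card_le_card hbi
  obtain ⟨g, hginj, hgmem⟩ := (Finset.all_card_le_biUnion_card_iff_exists_injective t).mp hhall
  refine ⟨fun u => if hu : u ∈ D then g ⟨u, hu⟩ else if u = y then x else u, ?_, ?_, ?_⟩
  · intro u hu v hv huv
    simp only [Finset.coe_erase, mem_coe] at hu hv
    by_cases huy : u = y <;> by_cases hvy : v = y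
    · rw [huy, hvy]
    · exfalso
      have hvD : v ∈ D := Finset.mem_erase.mpr ⟨hvy, hv⟩
      have hyD : y ∉ D := fun h => (Finset.mem_erase.mp h).1 rfl
      rw [huy] at huv
      simp only [dif_neg hyD, if_pos rfl, dif_pos hvD] at huv
      have := hgmem ⟨v, hvD⟩
      rw [ht, Finset.mem_filter, Finset.mem_erase] at this
      exact this.1.1 huv.symm
    · exfalso
      have huD : u ∈ D := Finset.mem_erase.mpr ⟨huy, hu⟩
      have hyD : y ∉ D := fun h => (Finset.mem_erase.mp h).1 rfl
      rw [hvy] at huv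
      simp only [dif_neg hyD, if_pos rfl, dif_pos huD] at huv
      have := hgmem ⟨u, huD⟩
      rw [ht, Finset.mem_filter, Finset.mem_erase] at this
      exact this.1.1 huv
    · have huD : u ∈ D := Finset.mem_erase.mpr ⟨huy, hu⟩
      have hvD : v ∈ D := Finset.mem_erase.mpr ⟨hvy, hv⟩
      simp only [dif_pos huD, dif_pos hvD] at huv
      have := hginj huv
      exact congrArg Subtype.val this
  · intro u hu
    by_cases huD : u ∈ D
    · simp only [dif_pos huD]
      have := hgmem ⟨u, huD⟩
      rw [ht, Finset.mem_filter, Finset.mem_erase] at this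
      exact ⟨this.1.2, this.2⟩
    · have huy : u = y := by
        by_contra h
        exact huD (Finset.mem_erase.mpr ⟨h, hu⟩)
      simp only [dif_neg huD, if_pos huy]
      rw [huy]
      exact ⟨hx, hxy.symm⟩
  · have hyD : y ∉ D := fun h => (Finset.mem_erase.mp h).1 rfl
    simp only [dif_neg hyD, if_pos rfl]
    simp


end CritGraph
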